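/- Let p ≥ 3 be a prime and let m, N be nonnegative integers. Then Dig_p((p+1)·N) ≤ Dig_p(N) + Dig_p(N+m) + (p−2)·m. -/
import Mathlib

private def dS (p n : ℕ) : ℕ := (Nat.digits p n).sum

private lemma dS_base (p : ℕ) (hp : 1 < p) (a r : ℕ) (hr : r < p) :
    dS p (p * a + r) = dS p a + r := by
  unfold dS
  rcases Nat.eq_zero_or_pos (p * a + r) with h | h
  · have ha : a = 0 := by
      rcases Nat.eq_zero_or_pos a with h' | h'
      · exact h'
      · exfalso; have := Nat.le_mul_of_pos_right p h'; omega
    have hr0 : r = 0 := by omega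
    simp [ha, hr0]
  · rw [Nat.digits_def' hp h, List.sum_cons]
    have h1 : (p * a + r) % p = r := by
      rw [Nat.mul_add_mod, Nat.mod_eq_of_lt hr]
    have h2 : (p * a + r) / p = a := by
      rw [Nat.mul_add_div (by omega), Nat.div_eq_of_lt hr]; omega
    rw [h1, h2]; omega

private lemma dS_zero (p : ℕ) : dS p 0 = 0 := by simp [dS]

private lemma dS_succ_le (p : ℕ) (hp : 1 < p) (n : ℕ) :
    dS p (n + 1) ≤ dS p n + 1 := by
  induction n using Nat.strong_induction_on with
  | _ n IH =>
    have h0 : 0 < p := by omega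
    have hn : p * (n / p) + n % p = n := Nat.div_add_mod n p
    have hr : n % p < p := Nat.mod_lt _ h0
    have en : dS p n = dS p (n / p) + n % p := by
      conv_lhs => rw [← hn]
      exact dS_base p hp _ _ hr
    by_cases hc : n % p + 1 < p
    · have e1 : dS p (n + 1) = dS p (n / p) + (n % p + 1) := by
        rw [show n + 1 = p * (n / p) + (n % p + 1) by omega]
        exact dS_base p hp _ _ hc
      omega
    · have hq : n / p < n := by
        have h2 : 2 * (n / p) ≤ p * (n / p) := Nat.mul_le_mul_right _ (by omega)
        omega
      have f1 : p * (n / p + 1) = p * (n / p) + p := by ring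
      have e1 : dS p (n + 1) = dS p (n / p + 1) + 0 := by
        rw [show n + 1 = p * (n / p + 1) + 0 by omega]
        exact dS_base p hp _ _ (by omega)
      have e2 := IH (n / p) hq
      omega

private lemma dS_add_le (p : ℕ) (hp : 1 < p) (a b : ℕ) :
    dS p (a + b) ≤ dS p a + b := by
  induction b with
  | zero => simp
  | succ b ih =>
    have h1 := dS_succ_le p hp (a + b)
    have h2 : dS p (a + (b + 1)) = dS p (a + b + 1) := rfl
    omega

private lemma dS_le_self (p : ℕ) (hp : 1 < p) (n : ℕ) : dS p n ≤ n := by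
  simpa [dS_zero] using dS_add_le p hp 0 n

private lemma dS_pos (p : ℕ) (hp : 1 < p) : ∀ n : ℕ, 0 < n → 0 < dS p n := by
  intro n
  induction n using Nat.strong_induction_on with
  | _ n IH =>
    intro hn
    have h0 : 0 < p := by omega
    have hn' : p * (n / p) + n % p = n := Nat.div_add_mod n p
    have hr : n % p < p := Nat.mod_lt _ h0
    have en : dS p n = dS p (n / p) + n % p := by
      conv_lhs => rw [← hn']
      exact dS_base p hp _ _ hr
    rcases Nat.eq_zero_or_pos (n % p) with h | h
    · have hq : n / p < n := by
        have h2 : 2 * (n / p) ≤ p * (n / p) := Nat.mul_le_mul_right _ (by omega)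
        omega
      have hqpos : 0 < n / p :=
        Nat.div_pos (Nat.le_of_dvd hn (Nat.dvd_of_mod_eq_zero h)) h0
      have := IH (n / p) hq hqpos
      omega
    · omega

private lemma main_ind (p : ℕ) (hp3 : 3 ≤ p) : ∀ N : ℕ,
    (∀ m : ℕ, dS p ((p + 1) * N) ≤ dS p N + dS p (N + m) + (p - 2) * dS p m) ∧
    (∀ s : ℕ, dS p ((p + 1) * N + (p - 1)) ≤
        dS p N + dS p (N + s + 1) + (p - 2) * (dS p s + 1)) := by
  have hp : 1 < p := by omega
  intro N
  induction N using Nat.strong_induction_on with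
  | _ N IH =>
    rcases Nat.eq_zero_or_pos N with rfl | hN
    · constructor
      · intro m
        have : dS p ((p + 1) * 0) = 0 := by
          rw [show (p + 1) * 0 = 0 by ring, dS_zero]
        omega
      · intro s
        have e1 : dS p ((p + 1) * 0 + (p - 1)) = dS p 0 + (p - 1) := by
          rw [show (p + 1) * 0 + (p - 1) = p * 0 + (p - 1) by omega]
          exact dS_base p hp _ _ (by omega)
        have e0 := dS_zero p
        have hpos : 0 < dS p (0 + s + 1) := dS_pos p hp _ (by omega)
        have hmul : (p - 2) * 1 ≤ (p - 2) * (dS p s + 1) := Nat.mul_le_mul_left _ (by omega)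
        omega
    · -- N > 0
      obtain ⟨q, r, hr, hNd⟩ : ∃ q r, r < p ∧ N = p * q + r :=
        ⟨N / p, N % p, Nat.mod_lt _ (by omega), (Nat.div_add_mod N p).symm⟩
      have hq : q < N := by
        have h2 : 2 * q ≤ p * q := Nat.mul_le_mul_right _ (by omega)
        omega
      have eN : dS p N = dS p q + r := by rw [hNd]; exact dS_base p hp _ _ hr
      have hNdec : (p + 1) * N = p * ((p + 1) * q + r) + r := by rw [hNd]; ring
      have e1 : dS p ((p + 1) * N) = dS p ((p + 1) * q + r) + r := by
        rw [hNdec]; exact dS_base p hp _ _ hr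
      constructor
      · -- P claim
        intro m
        obtain ⟨s, t, ht, hmd⟩ : ∃ s t, t < p ∧ m = p * s + t :=
          ⟨m / p, m % p, Nat.mod_lt _ (by omega), (Nat.div_add_mod m p).symm⟩
        have em : dS p m = dS p s + t := by rw [hmd]; exact dS_base p hp _ _ ht
        have hm2 : (p - 2) * dS p m = (p - 2) * dS p s + (p - 2) * t := by
          rw [em, Nat.mul_add]
        have bound : dS p ((p + 1) * q + r) ≤ dS p ((p + 1) * q) + r :=
          dS_add_le p hp _ r
        by_cases hc : r + t < p
        · have f1 : p * (q + s) = p * q + p * s := by ring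
          have hsum : N + m = p * (q + s) + (r + t) := by omega
          have e4 : dS p (N + m) = dS p (q + s) + (r + t) := by
            rw [hsum]; exact dS_base p hp _ _ hc
          have ihp := (IH q hq).1 s
          omega
        · obtain ⟨d, hd, hdlt⟩ : ∃ d, r + t = p + d ∧ d < p := ⟨r + t - p, by omega, by omega⟩
          have f1 : p * (q + s + 1) = p * q + p * s + p := by ring
          have hsum : N + m = p * (q + s + 1) + d := by omega
          have e4 : dS p (N + m) = dS p (q + s + 1) + d := by
            rw [hsum]; exact dS_base p hp _ _ hdlt
          by_cases ht1 : t = 1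
          · have hr' : r = p - 1 := by omega
            subst hr'
            subst ht1
            have ihq := (IH q hq).2 s
            have hexp : (p - 2) * (dS p s + 1) = (p - 2) * dS p s + (p - 2) := by
              rw [Nat.mul_add, Nat.mul_one]
            omega
          · have ht2 : 2 ≤ t := by omega
            have ihp := (IH q hq).1 (s + 1)
            have hlink : dS p (q + (s + 1)) = dS p (q + s + 1) := rfl
            have hsucc : dS p (s + 1) ≤ dS p s + 1 := dS_succ_le p hp s
            have hm3 : (p - 2) * dS p (s + 1) ≤ (p - 2) * dS p s + (p - 2) := by
              calc (p - 2) * dS p (s + 1) ≤ (p - 2) * (dS p s + 1) :=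
                    Nat.mul_le_mul_left _ hsucc
                _ = (p - 2) * dS p s + (p - 2) := by rw [Nat.mul_add, Nat.mul_one]
            have hmt : (p - 2) * 2 ≤ (p - 2) * t := Nat.mul_le_mul_left _ ht2
            omega
      · -- Q' claim
        intro s
        obtain ⟨s', t, ht, hsd⟩ : ∃ s' t, t < p ∧ s = p * s' + t :=
          ⟨s / p, s % p, Nat.mod_lt _ (by omega), (Nat.div_add_mod s p).symm⟩
        have es : dS p s = dS p s' + t := by rw [hsd]; exact dS_base p hp _ _ ht
        have hexp : (p - 2) * (dS p s + 1) =
            (p - 2) * dS p s' + (p - 2) * t + (p - 2) := by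
          rw [es, Nat.mul_add, Nat.mul_add, Nat.mul_one]
        by_cases hr0 : r = 0
        · subst hr0
          have hdec : (p + 1) * N + (p - 1) = p * ((p + 1) * q) + (p - 1) := by
            have f1 : p * ((p + 1) * q) = p * ((p + 1) * q + 0) := by ring
            omega
          have e1' : dS p ((p + 1) * N + (p - 1)) = dS p ((p + 1) * q) + (p - 1) := by
            rw [hdec]; exact dS_base p hp _ _ (by omega)
          by_cases hc : t + 1 < p
          · have f1 : p * (q + s') = p * q + p * s' := by ring
            have hsum : N + s + 1 = p * (q + s') + (t + 1) := by omega
            have e4 : dS p (N + s + 1) = dS p (q + s') + (t + 1) := by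
              rw [hsum]; exact dS_base p hp _ _ hc
            have ihp := (IH q hq).1 s'
            omega
          · -- t = p - 1
            have f1 : p * (q + s' + 1) = p * q + p * s' + p := by ring
            have hsum : N + s + 1 = p * (q + s' + 1) + 0 := by omega
            have e4 : dS p (N + s + 1) = dS p (q + s' + 1) + 0 := by
              rw [hsum]; exact dS_base p hp _ _ (by omega)
            have ihp := (IH q hq).1 (s' + 1)
            have hlink : dS p (q + (s' + 1)) = dS p (q + s' + 1) := rfl
            have hsucc : dS p (s' + 1) ≤ dS p s' + 1 := dS_succ_le p hp s'
            have hm3 : (p - 2) * dS p (s' + 1) ≤ (p - 2) * dS p s' + (p - 2) := by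
              calc (p - 2) * dS p (s' + 1) ≤ (p - 2) * (dS p s' + 1) :=
                    Nat.mul_le_mul_left _ hsucc
                _ = (p - 2) * dS p s' + (p - 2) := by rw [Nat.mul_add, Nat.mul_one]
            have hmt : 1 * t ≤ (p - 2) * t := Nat.mul_le_mul_right _ (by omega)
            omega
        · -- r ≥ 1
          have hr1 : 1 ≤ r := by omega
          have f0 : p * ((p + 1) * q + r + 1) = p * ((p + 1) * q + r) + p := by ring
          have hdec : (p + 1) * N + (p - 1) = p * ((p + 1) * q + r + 1) + (r - 1) := by
            omega
          have e1' : dS p ((p + 1) * N + (p - 1)) =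
              dS p ((p + 1) * q + r + 1) + (r - 1) := by
            rw [hdec]; exact dS_base p hp _ _ (by omega)
          by_cases hc : r + t + 1 < p
          · have bound' : dS p ((p + 1) * q + r + 1) ≤ dS p ((p + 1) * q) + (r + 1) := by
              have := dS_add_le p hp ((p + 1) * q) (r + 1)
              have harg : (p + 1) * q + r + 1 = (p + 1) * q + (r + 1) := by omega
              rw [harg]; exact this
            have f1 : p * (q + s') = p * q + p * s' := by ring
            have hsum : N + s + 1 = p * (q + s') + (r + t + 1) := by omega
            have e4 : dS p (N + s + 1) = dS p (q + s') + (r + t + 1) := by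
              rw [hsum]; exact dS_base p hp _ _ hc
            have ihp := (IH q hq).1 s'
            omega
          · by_cases ht0 : t = 0
            · -- r = p - 1, t = 0
              have hr' : r = p - 1 := by omega
              subst hr'
              subst ht0
              have hsucc2 : dS p ((p + 1) * q + (p - 1) + 1) ≤
                  dS p ((p + 1) * q + (p - 1)) + 1 :=
                dS_succ_le p hp ((p + 1) * q + (p - 1))
              have ihq := (IH q hq).2 s'
              have hexp2 : (p - 2) * (dS p s' + 1) = (p - 2) * dS p s' + (p - 2) := by
                rw [Nat.mul_add, Nat.mul_one]
              have f1 : p * (q + s' + 1) = p * q + p * s' + p := by ring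
              have hsum : N + s + 1 = p * (q + s' + 1) + 0 := by omega
              have e4 : dS p (N + s + 1) = dS p (q + s' + 1) + 0 := by
                rw [hsum]; exact dS_base p hp _ _ (by omega)
              omega
            · -- t ≥ 1, carry
              have ht1 : 1 ≤ t := by omega
              obtain ⟨d, hd, hdlt⟩ : ∃ d, r + t + 1 = p + d ∧ d < p :=
                ⟨r + t + 1 - p, by omega, by omega⟩
              have bound' : dS p ((p + 1) * q + r + 1) ≤ dS p ((p + 1) * q) + (r + 1) := by
                have := dS_add_le p hp ((p + 1) * q) (r + 1)
                have harg : (p + 1) * q + r + 1 = (p + 1) * q + (r + 1) := by omega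
                rw [harg]; exact this
              have f1 : p * (q + s' + 1) = p * q + p * s' + p := by ring
              have hsum : N + s + 1 = p * (q + s' + 1) + d := by omega
              have e4 : dS p (N + s + 1) = dS p (q + s' + 1) + d := by
                rw [hsum]; exact dS_base p hp _ _ hdlt
              have ihp := (IH q hq).1 (s' + 1)
              have hlink : dS p (q + (s' + 1)) = dS p (q + s' + 1) := rfl
              have hsucc : dS p (s' + 1) ≤ dS p s' + 1 := dS_succ_le p hp s'
              have hm3 : (p - 2) * dS p (s' + 1) ≤ (p - 2) * dS p s' + (p - 2) := by
                calc (p - 2) * dS p (s' + 1) ≤ (p - 2) * (dS p s' + 1) :=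
                      Nat.mul_le_mul_left _ hsucc
                  _ = (p - 2) * dS p s' + (p - 2) := by rw [Nat.mul_add, Nat.mul_one]
              have hmt : (p - 2) * 1 ≤ (p - 2) * t := Nat.mul_le_mul_left _ ht1
              omega

/-- For a prime `p ≥ 3` and nonnegative integers `m`, `N`:
`Dig_p((p+1)·N) ≤ Dig_p(N) + Dig_p(N+m) + (p-2)·m`, where `Dig_p` is the sum of base-`p`
digits. -/
theorem statement11 (p : ℕ) (hp : p.Prime) (hp3 : 3 ≤ p) (m N : ℕ) :
    (Nat.digits p ((p + 1) * N)).sum ≤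
      (Nat.digits p N).sum + (Nat.digits p (N + m)).sum + (p - 2) * m := by
  have hp1 : 1 < p := by omega
  have h := (main_ind p hp3 N).1 m
  have hms : dS p m ≤ m := dS_le_self p hp1 m
  have hmul : (p - 2) * dS p m ≤ (p - 2) * m := Nat.mul_le_mul_left _ hms
  have : dS p ((p + 1) * N) ≤ dS p N + dS p (N + m) + (p - 2) * m := le_trans h (by omega)
  exact this
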